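/- Let R be a complete regular local ring of characteristic p, I ⊆ R an ideal generated by a regular sequence g_1, ..., g_m, and set g = g_1···g_m. Then for all e ≥ 0, the colon ideal (I^[p^e] : I) equals g^{p^e−1}·R + I^[p^e]. -/

import Mathlib

/-- The `q`-th Frobenius power of an ideal: the ideal generated by `q`-th powers of its
elements. -/
def fpow {R : Type*} [CommRing R] (q : ℕ) (J : Ideal R) : Ideal R :=
  Ideal.span ((fun a => a ^ q) '' (J : Set R))

/-- `ν_e = 1 + p + ... + p^{e-1}`. -/
def nu (p e : ℕ) : ℕ := ∑ i ∈ Finset.range e, p ^ i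

open Ideal IsLocalRing

section Aux
variable {R : Type*} [CommRing R]

/-- `a` is a nonzerodivisor modulo the ideal `J`. -/
def RegMod (J : Ideal R) (a : R) : Prop := ∀ v, a * v ∈ J → v ∈ J

/-- Elementwise weakly regular sequence modulo an ideal. -/
def WSeq (J : Ideal R) : List R → Prop
  | [] => True
  | a :: l => RegMod J a ∧ WSeq (J ⊔ span {a}) l

lemma regMod_top (a : R) : RegMod (⊤ : Ideal R) a := fun _ _ => trivial

lemma RegMod.pow {J : Ideal R} {a : R} (h : RegMod J a) (k : ℕ) : RegMod J (a ^ k) := by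
  induction k with
  | zero => intro v hv; rwa [pow_zero, one_mul] at hv
  | succ k ih =>
    intro v hv
    rw [pow_succ, mul_assoc] at hv
    exact h v (ih _ hv)

lemma mem_sup_span_singleton'' {J : Ideal R} {a z : R} (h : z ∈ J ⊔ span {a}) :
    ∃ w ∈ J, ∃ c, z = w + c * a := by
  obtain ⟨w, hw, y, hy, rfl⟩ := Submodule.mem_sup.mp h
  obtain ⟨c, rfl⟩ := Ideal.mem_span_singleton'.mp hy
  exact ⟨w, hw, c, rfl⟩

lemma mem_sup_span_singleton_of {J : Ideal R} {a w : R} (hw : w ∈ J) (c : R) :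
    w + c * a ∈ J ⊔ span {a} :=
  Submodule.add_mem _ (Ideal.mem_sup_left hw)
    (Ideal.mem_sup_right (Ideal.mem_span_singleton'.mpr ⟨c, rfl⟩))

/-- The last element of a weakly regular sequence is regular modulo the previous ones. -/
lemma WSeq.last {b : R} : ∀ (l : List R) (J : Ideal R), WSeq J (l ++ [b]) →
    RegMod (J ⊔ ofList l) b := by
  intro l
  induction l with
  | nil => intro J h; simpa using h.1
  | cons a l ih =>
    intro J h
    have := ih (J ⊔ span {a}) h.2
    rwa [ofList_cons, ← sup_assoc]

/-- Powering the first element of a (shifted) weakly regular pair keeps regularity. -/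
lemma regMod_pow_sup {J : Ideal R} {a b : R} (ha : RegMod J a)
    (hb : RegMod (J ⊔ span {a}) b) : ∀ t, RegMod (J ⊔ span {a ^ t}) b := by
  intro t
  induction t with
  | zero =>
    have h : J ⊔ span {a ^ 0} = ⊤ := by
      rw [pow_zero, Ideal.span_singleton_one]; exact sup_top_eq J
    rw [h]; exact regMod_top b
  | succ t ih =>
    intro v hv
    obtain ⟨w, hw, c, hvw⟩ := mem_sup_span_singleton'' hv
    have hv1 : v ∈ J ⊔ span {a} := by
      refine hb v ?_
      rw [hvw]
      exact Submodule.add_mem _ (Ideal.mem_sup_left hw)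
        (Ideal.mem_sup_right (Ideal.mem_span_singleton'.mpr ⟨c * a ^ t, by ring⟩))
    obtain ⟨j', hj', s, rfl⟩ := mem_sup_span_singleton'' hv1
    have key : a * (b * s - c * a ^ t) ∈ J := by
      have heq : a * (b * s - c * a ^ t) = (b * (j' + s * a) - (w + c * a ^ (t + 1)))
          + w - b * j' := by ring
      rw [heq, ← hvw]
      have : b * (j' + s * a) - b * (j' + s * a) + w - b * j' = w - b * j' := by ring
      rw [this]
      exact Submodule.sub_mem _ hw (J.mul_mem_left b hj')
    have hsJ : b * s - c * a ^ t ∈ J := ha _ key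
    have hbs : b * s ∈ J ⊔ span {a ^ t} := by
      have heq : b * s = (b * s - c * a ^ t) + c * a ^ t := by ring
      rw [heq]; exact mem_sup_span_singleton_of hsJ c
    obtain ⟨j'', hj'', d, rfl⟩ := mem_sup_span_singleton'' (ih s hbs)
    have heq : j' + (j'' + d * a ^ t) * a = (j' + j'' * a) + d * a ^ (t + 1) := by ring
    rw [heq]
    exact mem_sup_span_singleton_of (Submodule.add_mem _ hj' (J.mul_mem_right a hj'')) d

variable [IsLocalRing R] [IsNoetherianRing R]

/-- Swap of a regular pair (in a Noetherian local ring). -/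
lemma swap_regMod {J : Ideal R} {a b : R} (hamax : a ∈ maximalIdeal R)
    (h1 : RegMod J a) (h2 : RegMod (J ⊔ span {a}) b) :
    RegMod J b ∧ RegMod (J ⊔ span {b}) a := by
  constructor
  · by_cases hJ : J = ⊤
    · subst hJ; exact regMod_top b
    intro z hz
    have claim : ∀ n, z ∈ J ⊔ span {a ^ n} := by
      intro n; induction n with
      | zero => simp [pow_zero, Ideal.span_singleton_one]
      | succ n ih =>
        obtain ⟨w, hw, c, rfl⟩ := mem_sup_span_singleton'' ih
        have h3 : a ^ n * (b * c) ∈ J := by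
          have heq : a ^ n * (b * c) = b * (w + c * a ^ n) - b * w := by ring
          rw [heq]
          exact Submodule.sub_mem _ hz (J.mul_mem_left b hw)
        have h4 : b * c ∈ J := h1.pow n _ h3
        have h5 : c ∈ J ⊔ span {a} := h2 c (Ideal.mem_sup_left h4)
        obtain ⟨w', hw', s, rfl⟩ := mem_sup_span_singleton'' h5
        have heq : w + (w' + s * a) * a ^ n = (w + w' * a ^ n) + s * a ^ (n + 1) := by ring
        rw [heq]
        exact mem_sup_span_singleton_of (Submodule.add_mem _ hw (J.mul_mem_right _ hw')) s
    -- Krull intersection in `R ⧸ J`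
    haveI : Nontrivial (R ⧸ J) := Ideal.Quotient.nontrivial_iff.mpr hJ
    haveI : IsLocalRing (R ⧸ J) :=
      IsLocalRing.of_surjective' (Ideal.Quotient.mk J) Ideal.Quotient.mk_surjective
    have hJm : J ≤ maximalIdeal R := IsLocalRing.le_maximalIdeal hJ
    have hane : (span {Ideal.Quotient.mk J a} : Ideal (R ⧸ J)) ≠ ⊤ := by
      intro htop
      obtain ⟨u, hu⟩ := (Ideal.span_singleton_eq_top.mp htop).exists_right_inv
      obtain ⟨c, rfl⟩ := Ideal.Quotient.mk_surjective u
      have hac : a * c - 1 ∈ J := by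
        rw [← Ideal.Quotient.eq_zero_iff_mem, map_sub, _root_.map_mul, map_one, sub_eq_zero]
        exact hu
      have h1m : (1 : R) ∈ maximalIdeal R := by
        have heq : (1 : R) = a * c - (a * c - 1) := by ring
        rw [heq]
        exact Submodule.sub_mem _ (Ideal.mul_mem_right c _ hamax) (hJm hac)
      exact (IsLocalRing.maximalIdeal.isMaximal R).ne_top ((Ideal.eq_top_iff_one _).mpr h1m)
    have hbot := Ideal.iInf_pow_eq_bot_of_isLocalRing
      (I := span {Ideal.Quotient.mk J a}) hane
    have hz' : Ideal.Quotient.mk J z ∈ (⨅ i : ℕ, (span {Ideal.Quotient.mk J a}) ^ i) := by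
      rw [Submodule.mem_iInf]
      intro n
      rw [Ideal.span_singleton_pow]
      obtain ⟨w, hw, c, hzw⟩ := mem_sup_span_singleton'' (claim n)
      rw [Ideal.mem_span_singleton']
      refine ⟨Ideal.Quotient.mk J c, ?_⟩
      rw [hzw, map_add, _root_.map_mul, map_pow, Ideal.Quotient.eq_zero_iff_mem.mpr hw, zero_add]
    rw [hbot, Submodule.mem_bot] at hz'
    exact Ideal.Quotient.eq_zero_iff_mem.mp hz'
  · intro v hv
    obtain ⟨j, hj, r, hvr⟩ := mem_sup_span_singleton'' hv
    have hrb : b * r ∈ J ⊔ span {a} := by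
      have heq : b * r = a * v - j := by rw [hvr]; ring
      rw [heq]
      exact Submodule.sub_mem _
        (Ideal.mem_sup_right (Ideal.mem_span_singleton'.mpr ⟨v, by ring⟩))
        (Ideal.mem_sup_left hj)
    obtain ⟨j', hj', s, rfl⟩ := mem_sup_span_singleton'' (h2 r hrb)
    have key : a * (v - s * b) ∈ J := by
      have heq : a * (v - s * b) = j + j' * b := by linear_combination hvr
      rw [heq]
      exact Submodule.add_mem _ hj (J.mul_mem_right b hj')
    have hvs : v - s * b ∈ J := h1 _ key
    have heq : v = (v - s * b) + s * b := by ring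
    rw [heq]
    exact mem_sup_span_singleton_of hvs s

/-- Powering the head of a weakly regular sequence. -/
lemma wseq_pow_first {a : R} (hamax : a ∈ maximalIdeal R) (t : ℕ) :
    ∀ (l : List R) (J : Ideal R), RegMod J a → WSeq (J ⊔ span {a}) l →
      WSeq (J ⊔ span {a ^ t}) l := by
  intro l
  induction l with
  | nil => intro J _ _; trivial
  | cons b l ih =>
    intro J ha hbl
    obtain ⟨hb, hl⟩ := hbl
    refine ⟨regMod_pow_sup ha hb t, ?_⟩
    have hswap := swap_regMod hamax ha hb
    have hl' : WSeq ((J ⊔ span {b}) ⊔ span {a}) l := by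
      rwa [sup_right_comm]
    have := ih (J ⊔ span {b}) hswap.2 hl'
    rwa [sup_right_comm] at this

/-- Powering an initial segment of a weakly regular sequence. -/
lemma wseq_pow_map (t : ℕ) : ∀ (xs ys : List R) (J : Ideal R),
    (∀ x ∈ xs, x ∈ maximalIdeal R) → WSeq J (xs ++ ys) →
    WSeq J (xs.map (· ^ t) ++ ys) := by
  intro xs
  induction xs with
  | nil => intro ys J _ h; simpa using h
  | cons x xs ih =>
    intro ys J hmax h
    obtain ⟨hx, hrest⟩ := h
    refine ⟨hx.pow t, ?_⟩
    have := ih ys (J ⊔ span {x}) (fun y hy => hmax y (List.mem_cons_of_mem x hy)) hrest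
    exact wseq_pow_first (hmax x List.mem_cons_self) t _ J hx this

/-- Rotating the last element of a weakly regular sequence to the front. -/
lemma wseq_rotate : ∀ (xs : List R) (J : Ideal R) (y : R),
    (∀ x ∈ xs, x ∈ maximalIdeal R) → WSeq J (xs ++ [y]) →
    RegMod J y ∧ WSeq (J ⊔ span {y}) xs := by
  intro xs
  induction xs with
  | nil => intro J y _ h; exact ⟨h.1, trivial⟩
  | cons x xs ih =>
    intro J y hmax h
    obtain ⟨hx, hrest⟩ := h
    obtain ⟨hy, hxs⟩ := ih (J ⊔ span {x}) y
      (fun z hz => hmax z (List.mem_cons_of_mem x hz)) hrest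
    have hswap := swap_regMod (hmax x List.mem_cons_self) hx hy
    refine ⟨hswap.1, hswap.2, ?_⟩
    rwa [sup_right_comm] at hxs

/-- The main colon computation, in relative form. -/
lemma key_rel (t : ℕ) (ht : 1 ≤ t) : ∀ (xs : List R) (J : Ideal R) (u : R),
    (∀ x ∈ xs, x ∈ maximalIdeal R) → WSeq J xs →
    (∀ x ∈ xs, u * x ∈ J ⊔ ofList (xs.map (· ^ t))) →
    u ∈ (J ⊔ ofList (xs.map (· ^ t))) ⊔ span {xs.prod ^ (t - 1)} := by
  intro xs
  induction xs using List.reverseRecOn with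
  | nil =>
    intro J u _ _ _
    apply Ideal.mem_sup_right
    simp [Ideal.span_singleton_one]
  | append_singleton xs y ih =>
    intro J u hmax hws hcol
    have hmax' : ∀ x ∈ xs, x ∈ maximalIdeal R :=
      fun x hx => hmax x (List.mem_append_left _ hx)
    obtain ⟨t, rfl⟩ : ∃ s, t = s + 1 := ⟨t - 1, (Nat.succ_pred_eq_of_pos ht).symm⟩
    simp only [Nat.add_sub_cancel] at ih ⊢
    set A := J ⊔ ofList (xs.map (· ^ (t + 1))) with hA
    have hsplit : J ⊔ ofList ((xs ++ [y]).map (· ^ (t + 1))) = A ⊔ span {y ^ (t + 1)} := by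
      rw [hA, List.map_append, ofList_append, sup_assoc]
      congr 1
      simp [ofList_cons]
    have hy : RegMod A y := by
      have hpow := wseq_pow_map (t + 1) xs [y] J hmax' hws
      exact WSeq.last _ J hpow
    obtain ⟨hyJ, hxsJy⟩ := wseq_rotate xs J y hmax' hws
    have huy : u * y ∈ A ⊔ span {y ^ (t + 1)} := by
      rw [← hsplit]; exact hcol y (List.mem_append_right _ (List.mem_singleton_self y))
    obtain ⟨w, hw, c, huyw⟩ := mem_sup_span_singleton'' huy
    have hw' : u - c * y ^ t ∈ A := by
      refine hy _ ?_
      have heq : y * (u - c * y ^ t) = (u * y) - c * y ^ (t + 1) := by ring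
      rw [heq, huyw]
      have heq2 : w + c * y ^ (t + 1) - c * y ^ (t + 1) = w := by ring
      rw [heq2]; exact hw
    have hcx : ∀ x ∈ xs, c * x ∈ (J ⊔ span {y}) ⊔ ofList (xs.map (· ^ (t + 1))) := by
      intro x hx
      have h1 : u * x ∈ A ⊔ span {y ^ (t + 1)} := by
        rw [← hsplit]; exact hcol x (List.mem_append_left _ hx)
      have h2 : c * y ^ t * x ∈ A ⊔ span {y ^ (t + 1)} := by
        have heq : c * y ^ t * x = u * x - (u - c * y ^ t) * x := by ring
        rw [heq]
        exact Submodule.sub_mem _ h1 (Ideal.mem_sup_left (A.mul_mem_right x hw'))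
      obtain ⟨w2, hw2, s, hs⟩ := mem_sup_span_singleton'' h2
      have h3 : c * x - s * y ∈ A := by
        refine (hy.pow t) _ ?_
        have heq : y ^ t * (c * x - s * y) = c * y ^ t * x - s * y ^ (t + 1) := by ring
        rw [heq, hs]
        have heq2 : w2 + s * y ^ (t + 1) - s * y ^ (t + 1) = w2 := by ring
        rw [heq2]; exact hw2
      have hAle : A ≤ (J ⊔ span {y}) ⊔ ofList (xs.map (· ^ (t + 1))) := by
        rw [hA]; exact sup_le_sup_right le_sup_left _
      have heq : c * x = (c * x - s * y) + s * y := by ring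
      rw [heq]
      exact Submodule.add_mem _ (hAle h3) (Ideal.mem_sup_left (Ideal.mem_sup_right
        (Ideal.mem_span_singleton'.mpr ⟨s, rfl⟩)))
    have hc := ih (J ⊔ span {y}) c hmax' hxsJy hcx
    rw [hsplit]
    have hprod : (xs ++ [y]).prod = xs.prod * y := by simp
    have hmem : c * y ^ t ∈ (A ⊔ span {y ^ (t + 1)}) ⊔ span {(xs ++ [y]).prod ^ t} := by
      rcases Submodule.mem_sup.mp hc with ⟨z1, hz1, z2, hz2, rfl⟩
      rcases Submodule.mem_sup.mp hz1 with ⟨z3, hz3, z4, hz4, rfl⟩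
      rcases Submodule.mem_sup.mp hz3 with ⟨z5, hz5, z6, hz6, rfl⟩
      obtain ⟨k, rfl⟩ := Ideal.mem_span_singleton'.mp hz6
      obtain ⟨d, rfl⟩ := Ideal.mem_span_singleton'.mp hz2
      have heq : (z5 + k * y + z4 + d * xs.prod ^ t) * y ^ t
          = (y ^ t * z5 + y ^ t * z4) + k * y ^ (t + 1)
            + d * (xs.prod * y) ^ t := by ring
      rw [hprod, heq]
      have hz5' : z5 ∈ A := by rw [hA]; exact Ideal.mem_sup_left hz5
      have hz4' : z4 ∈ A := by rw [hA]; exact Ideal.mem_sup_right hz4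
      refine Submodule.add_mem _ (Submodule.add_mem _ ?_ ?_) ?_
      · exact Ideal.mem_sup_left (Ideal.mem_sup_left (Submodule.add_mem _
          (A.mul_mem_left _ hz5') (A.mul_mem_left _ hz4')))
      · exact Ideal.mem_sup_left (Ideal.mem_sup_right
          (Ideal.mem_span_singleton'.mpr ⟨k, rfl⟩))
      · exact Ideal.mem_sup_right (Ideal.mem_span_singleton'.mpr ⟨d, rfl⟩)
    have hueq : u = (u - c * y ^ t) + c * y ^ t := by ring
    rw [hueq]
    exact Submodule.add_mem _ (Ideal.mem_sup_left (Ideal.mem_sup_left hw')) hmem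

end Aux

section Main
variable {R : Type*} [CommRing R]

lemma isSMulRegular_quot_iff (I : Ideal R) (b : R) :
    IsSMulRegular (R ⧸ I) b ↔ RegMod I b := by
  constructor
  · intro h v hv
    have hb : b • (Submodule.Quotient.mk v : R ⧸ I) = b • (0 : R ⧸ I) := by
      rw [smul_zero, ← Submodule.Quotient.mk_smul, smul_eq_mul]
      exact (Submodule.Quotient.mk_eq_zero _).mpr hv
    exact (Submodule.Quotient.mk_eq_zero _).mp (h hb)
  · intro h x y hxy
    obtain ⟨v, rfl⟩ := Submodule.Quotient.mk_surjective _ x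
    obtain ⟨w, rfl⟩ := Submodule.Quotient.mk_surjective _ y
    have h1 : b * (v - w) ∈ I := by
      have hxy' : Submodule.Quotient.mk (p := I) (b • v) = Submodule.Quotient.mk (b • w) := by
        simpa only [Submodule.Quotient.mk_smul] using hxy
      have h3 : b • v - b • w ∈ I := (Submodule.Quotient.eq _).mp hxy'
      simpa [smul_eq_mul, mul_sub] using h3
    exact (Submodule.Quotient.eq _).mpr (by simpa using h _ h1)

lemma toWSeq : ∀ (l : List R) (J : Ideal R),
    (∀ i (h : i < l.length), RegMod (J ⊔ ofList (l.take i)) l[i]) → WSeq J l := by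
  intro l
  induction l with
  | nil => intro J _; trivial
  | cons a l ih =>
    intro J h
    constructor
    · have := h 0 (by simp)
      simpa using this
    · refine ih (J ⊔ span {a}) ?_
      intro i hi
      have := h (i + 1) (by simpa using Nat.succ_lt_succ hi)
      simp only [List.take_succ_cons, ofList_cons, List.getElem_cons_succ] at this
      rwa [← sup_assoc] at this

lemma wseq_of_isWeaklyRegular {l : List R}
    (h : RingTheory.Sequence.IsWeaklyRegular R l) : WSeq (⊥ : Ideal R) l := by
  apply toWSeq
  intro i hi
  have h2 := h.regular_mod_prev i hi
  have hsm : (ofList (l.take i) • ⊤ : Submodule R R) = ofList (l.take i) := by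
    rw [smul_eq_mul, mul_top]
  rw [hsm, isSMulRegular_quot_iff] at h2
  simpa using h2

lemma fpow_ofList_eq (p : ℕ) (hp : p.Prime) [CharP R p] (e : ℕ) (l : List R) :
    fpow (p ^ e) (ofList l) = ofList (l.map (· ^ p ^ e)) := by
  haveI := Fact.mk hp
  apply le_antisymm
  · rw [fpow, Ideal.span_le]
    rintro z ⟨a, ha, rfl⟩
    show a ^ p ^ e ∈ ofList (l.map (· ^ p ^ e))
    induction ha using Submodule.span_induction with
    | mem x hx => exact Ideal.subset_span (List.mem_map.mpr ⟨x, hx, rfl⟩)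
    | zero =>
      rw [zero_pow (pow_ne_zero e hp.ne_zero)]
      exact Submodule.zero_mem _
    | add x y hx hy ihx ihy =>
      rw [add_pow_char_pow]
      exact Submodule.add_mem _ ihx ihy
    | smul r x hx ihx =>
      rw [smul_eq_mul, mul_pow]
      exact Ideal.mul_mem_left _ _ ihx
  · rw [Ideal.span_le]
    intro z hz
    obtain ⟨a, ha, rfl⟩ := List.mem_map.mp hz
    exact Ideal.subset_span ⟨a, Ideal.subset_span ha, rfl⟩

end Main

theorem stmt_16 {R : Type*} [CommRing R] [IsLocalRing R] [IsNoetherianRing R]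
    (p : ℕ) (hp : p.Prime) [CharP R p]
    -- `R` is complete:
    [IsAdicComplete (IsLocalRing.maximalIdeal R) R]
    -- `R` is regular:
    (hregular : ∃ rs : List R, RingTheory.Sequence.IsRegular R rs ∧
      Ideal.span {x | x ∈ rs} = IsLocalRing.maximalIdeal R)
    (g : List R) (hg : RingTheory.Sequence.IsRegular R g)
    (I : Ideal R) (hI : I = Ideal.span {x | x ∈ g}) (e : ℕ) :
    (fpow (p ^ e) I).colon I = Ideal.span {g.prod ^ (p ^ e - 1)} ⊔ fpow (p ^ e) I := by
  subst hI
  classical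
  have hw : WSeq (⊥ : Ideal R) g := wseq_of_isWeaklyRegular hg.toIsWeaklyRegular
  have hproper : ofList g ≠ ⊤ := by
    intro htop
    exact hg.top_ne_smul (by rw [htop, smul_eq_mul, top_mul]) |>.elim
  have hmax : ∀ x ∈ g, x ∈ maximalIdeal R := fun x hx =>
    IsLocalRing.le_maximalIdeal hproper (Ideal.subset_span hx)
  have hq1 : 1 ≤ p ^ e := Nat.one_le_pow e p hp.pos
  have hfp : fpow (p ^ e) (Ideal.span {x | x ∈ g}) = ofList (g.map (· ^ p ^ e)) :=
    fpow_ofList_eq p hp e g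
  rw [hfp]
  apply le_antisymm
  · intro u hu
    have hcol : ∀ x ∈ g, u * x ∈ (⊥ : Ideal R) ⊔ ofList (g.map (· ^ p ^ e)) := by
      intro x hx
      rw [bot_sup_eq]
      have := Submodule.mem_colon.mp hu x (Ideal.subset_span hx)
      simpa [smul_eq_mul] using this
    have hkey := key_rel (p ^ e) hq1 g ⊥ u hmax hw hcol
    rw [bot_sup_eq] at hkey
    rwa [sup_comm] at hkey
  · apply sup_le
    · rw [Ideal.span_le]
      intro z hz
      rw [Set.mem_singleton_iff] at hz; subst hz
      rw [SetLike.mem_coe, Submodule.mem_colon]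
      intro a ha
      rw [smul_eq_mul]
      induction ha using Submodule.span_induction with
      | mem x hx =>
        have hxp : x * (g.erase x).prod = g.prod := List.prod_erase hx
        have heq : g.prod ^ (p ^ e - 1) * x = x ^ p ^ e * (g.erase x).prod ^ (p ^ e - 1) := by
          rw [← hxp, mul_pow, mul_right_comm,
            pow_sub_one_mul (Nat.one_le_iff_ne_zero.mp hq1) x]
        rw [heq]
        exact Ideal.mul_mem_right _ _
          (Ideal.subset_span (List.mem_map.mpr ⟨x, hx, rfl⟩))
      | zero => rw [mul_zero]; exact Submodule.zero_mem _
      | add x y hx hy ihx ihy => rw [mul_add]; exact Submodule.add_mem _ ihx ihy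
      | smul r x hx ihx =>
        rw [smul_eq_mul, mul_comm r x, ← mul_assoc]
        exact Ideal.mul_mem_right _ _ ihx
    · intro z hz
      rw [Submodule.mem_colon]
      intro a ha
      rw [smul_eq_mul]
      exact Ideal.mul_mem_right _ _ hz
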